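/- For every r > 0 and v > 1, the derivative of z ↦ F(z; r, v) evaluated at z = e^{r} − 1 is strictly positive; explicitly, with z = e^{r} − 1 it equals (1/(1+z))·(2/(1+2z) + 2 − ln(1+2z)/ln(1+z)) > 0. -/
import Mathlib


/-- The derivative of `z ↦ F(z; r, v)` at `z = eʳ − 1` equals
`(1/(1+z)) (2/(1+2z) + 2 − ln(1+2z)/ln(1+z))`, and is strictly positive. -/
theorem F_deriv_at_zmin_pos (r v : ℝ) (hr : 0 < r) (hv : 1 < v)
    (z : ℝ) (hz : z = Real.exp r - 1) :
    deriv (fun z : ℝ =>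
        (r / Real.log (1 + z) + 1) * Real.log (1 + 2 * z) - 2 * r - Real.log v) z
      = 1 / (1 + z) * (2 / (1 + 2 * z)
          + (2 - Real.log (1 + 2 * z) / Real.log (1 + z))) ∧
    0 < 1 / (1 + z) * (2 / (1 + 2 * z)
          + (2 - Real.log (1 + 2 * z) / Real.log (1 + z))) := by
  have hz0 : 0 < z := by
    have h := Real.add_one_lt_exp (ne_of_gt hr)
    rw [hz]; linarith
  have h1z : (0:ℝ) < 1 + z := by linarith
  have h2z : (0:ℝ) < 1 + 2 * z := by linarith
  have hL : Real.log (1 + z) = r := by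
    rw [hz, show 1 + (Real.exp r - 1) = Real.exp r by ring, Real.log_exp]
  have hLne : Real.log (1 + z) ≠ 0 := by rw [hL]; exact ne_of_gt hr
  have hA : HasDerivAt (fun x : ℝ => Real.log (1 + x)) (1 / (1 + z)) z := by
    have := ((hasDerivAt_id z).const_add (1:ℝ)).log (ne_of_gt h1z)
    simpa using this
  have hB : HasDerivAt (fun x : ℝ => Real.log (1 + 2 * x)) (2 / (1 + 2 * z)) z := by
    have := (((hasDerivAt_id z).const_mul (2:ℝ)).const_add (1:ℝ)).log (ne_of_gt h2z)
    simpa using this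
  have hC : HasDerivAt (fun x : ℝ => r / Real.log (1 + x) + 1)
      ((0 * Real.log (1 + z) - r * (1 / (1 + z))) / (Real.log (1 + z))^2) z :=
    ((hasDerivAt_const z r).div hA hLne).add_const 1
  have hD : HasDerivAt (fun x : ℝ =>
      (r / Real.log (1 + x) + 1) * Real.log (1 + 2 * x) - 2 * r - Real.log v)
      ((0 * Real.log (1 + z) - r * (1 / (1 + z))) / (Real.log (1 + z))^2
          * Real.log (1 + 2 * z)
        + (r / Real.log (1 + z) + 1) * (2 / (1 + 2 * z))) z :=
    ((hC.mul hB).sub_const (2 * r)).sub_const (Real.log v)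
  have hM : Real.log (1 + 2 * z) < 2 * r := by
    have h2 : Real.log (1 + 2 * z) < Real.log ((1 + z)^2) :=
      Real.log_lt_log h2z (by nlinarith)
    rw [Real.log_pow, hL] at h2
    push_cast at h2
    linarith
  constructor
  · rw [hD.deriv, hL]
    field_simp
    ring
  · rw [hL]
    have h1 : Real.log (1 + 2 * z) / r < 2 := (div_lt_iff₀ hr).mpr (by linarith)
    have h2 : (0:ℝ) < 2 / (1 + 2 * z) := by positivity
    have h3 : (0:ℝ) < 1 / (1 + z) := by positivity
    have : (0:ℝ) < 2 / (1 + 2 * z) + (2 - Real.log (1 + 2 * z) / r) := by linarith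
    exact mul_pos h3 this
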